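/- For a connected weighted graph, λ_2(L_g) ≥ 4 / (n ∑_l R_l(g)), where the sum is of effective resistances over the edges. -/

import Mathlib

open Matrix BigOperators

/-- `P` is the Moore–Penrose pseudoinverse of `M`. -/
def IsMoorePenrose {n : ℕ} (M P : Matrix (Fin n) (Fin n) ℝ) : Prop :=
  M * P * M = M ∧ P * M * P = P ∧ (M * P)ᵀ = M * P ∧ (P * M)ᵀ = P * M

theorem mp_unique {n : ℕ} {M P Q : Matrix (Fin n) (Fin n) ℝ}
    (hP : IsMoorePenrose M P) (hQ : IsMoorePenrose M Q) : P = Q := by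
  obtain ⟨h1, h2, h3, h4⟩ := hP
  obtain ⟨g1, g2, g3, g4⟩ := hQ
  have e1 : M * P = M * Q := by
    calc M * P = (M * P)ᵀ := h3.symm
    _ = ((M * Q * M) * P)ᵀ := by rw [g1]
    _ = ((M * Q) * (M * P))ᵀ := by rw [Matrix.mul_assoc (M * Q) M P]
    _ = (M * P)ᵀ * (M * Q)ᵀ := by rw [Matrix.transpose_mul]
    _ = (M * P) * (M * Q) := by rw [h3, g3]
    _ = (M * P * M) * Q := by simp only [Matrix.mul_assoc]
    _ = M * Q := by rw [h1]
  have e2 : P * M = Q * M := by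
    calc P * M = (P * M)ᵀ := h4.symm
    _ = (P * (M * Q * M))ᵀ := by rw [g1]
    _ = ((P * M) * (Q * M))ᵀ := by simp only [Matrix.mul_assoc]
    _ = (Q * M)ᵀ * (P * M)ᵀ := by rw [Matrix.transpose_mul]
    _ = (Q * M) * (P * M) := by rw [h4, g4]
    _ = Q * (M * P * M) := by simp only [Matrix.mul_assoc]
    _ = Q * M := by rw [h1]
  calc P = P * M * P := h2.symm
  _ = (Q * M) * P := by rw [e2]
  _ = Q * (M * P) := by rw [Matrix.mul_assoc]
  _ = Q * (M * Q) := by rw [e1]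
  _ = Q * M * Q := by rw [Matrix.mul_assoc]
  _ = Q := g2

theorem psd_cauchy {n : ℕ} (P : Matrix (Fin n) (Fin n) ℝ)
    (hpsd : ∀ x, 0 ≤ x ⬝ᵥ (P *ᵥ x)) (hsym : ∀ x y, x ⬝ᵥ (P *ᵥ y) = y ⬝ᵥ (P *ᵥ x))
    (a b : Fin n → ℝ) :
    (a ⬝ᵥ (P *ᵥ b))^2 ≤ (a ⬝ᵥ (P *ᵥ a)) * (b ⬝ᵥ (P *ᵥ b)) := by
  set A := a ⬝ᵥ (P *ᵥ a) with hA
  set B := b ⬝ᵥ (P *ᵥ b) with hB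
  set C := a ⬝ᵥ (P *ᵥ b) with hC
  have hq : ∀ t : ℝ, 0 ≤ A + 2*t*C + t^2*B := by
    intro t
    have h := hpsd (a + t • b)
    have hba : b ⬝ᵥ (P *ᵥ a) = C := hsym b a
    have expand : (a + t • b) ⬝ᵥ (P *ᵥ (a + t • b)) = A + 2*t*C + t^2*B := by
      rw [Matrix.mulVec_add, Matrix.mulVec_smul, dotProduct_add, add_dotProduct,
        add_dotProduct, dotProduct_smul, dotProduct_smul, smul_dotProduct,
        smul_dotProduct, smul_eq_mul, smul_eq_mul, smul_eq_mul, smul_eq_mul, hba,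
        ← hA, ← hB, ← hC]
      ring
    rw [expand] at h
    exact h
  have hA0 : 0 ≤ A := hpsd a
  have hB0 : 0 ≤ B := hpsd b
  rcases eq_or_lt_of_le hB0 with hBz | hBp
  · rcases eq_or_ne C 0 with hCz | hCz
    · rw [hCz]; nlinarith
    · exfalso
      have h := hq (-(A+1)/(2*C))
      rw [← hBz] at h
      simp only [mul_zero, add_zero] at h
      have ht : 2 * (-(A+1)/(2*C)) * C = -(A+1) := by field_simp
      rw [ht] at h
      linarith
  · have h := hq (-C/B)
    have hBne : B ≠ 0 := ne_of_gt hBp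
    have h2 : 0 ≤ A - C^2/B := by
      have : A + 2*(-C/B)*C + (-C/B)^2*B = A - C^2/B := by field_simp; ring
      linarith [this ▸ h]
    have h3 : C^2/B ≤ A := by linarith
    calc C^2 = (C^2/B) * B := by field_simp
    _ ≤ A * B := mul_le_mul_of_nonneg_right h3 hBp.le

theorem dart_dist {n : ℕ} {G : SimpleGraph (Fin n)} (hG : G.Connected) :
    ∀ {i j : Fin n} (p : G.Walk i j), p.length = G.dist i j →
      ∀ d ∈ p.darts, G.dist i d.fst + (1 + G.dist d.snd j) = G.dist i j := by
  intro i j p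
  induction p with
  | nil => intro _ d hd; simp at hd
  | @cons i c j h q ih =>
    intro hlen d hd
    have hq1 : G.dist c j ≤ q.length := SimpleGraph.dist_le q
    have hic : G.dist i c ≤ 1 := by
      simpa using SimpleGraph.dist_le (SimpleGraph.Walk.cons h SimpleGraph.Walk.nil)
    have htri : G.dist i j ≤ G.dist i c + G.dist c j := hG.dist_triangle
    have hlen' : q.length + 1 = G.dist i j := by simpa using hlen
    have hqd : q.length = G.dist c j := by omega
    rw [SimpleGraph.Walk.darts_cons] at hd
    rcases List.mem_cons.mp hd with rfl | hd
    · simp only [SimpleGraph.dist_self]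
      omega
    · have e : G.dist c d.fst + (1 + G.dist d.snd j) = G.dist c j := ih hqd d hd
      have up : G.dist i d.fst ≤ G.dist i c + G.dist c d.fst := hG.dist_triangle
      have lo1 : G.dist i j ≤ G.dist i d.fst + G.dist d.fst j := hG.dist_triangle
      have lo2 : G.dist d.fst j ≤ G.dist d.fst d.snd + G.dist d.snd j := hG.dist_triangle
      have hab : G.dist d.fst d.snd ≤ 1 := by
        simpa using SimpleGraph.dist_le (SimpleGraph.Walk.cons d.adj SimpleGraph.Walk.nil)
      omega

/-- For a connected weighted graph with weighted Laplacian `L`, every positive eigenvalue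
`μ` of `L` (in particular `λ₂`) satisfies `μ ≥ 4 / (n · ∑_{edges} R_l)`, where `R_l` is
the effective resistance of edge `l` (the sum over edges equals half the sum over ordered
adjacent pairs). -/
theorem lambda2_ge_four_div_sum_edge_resistances {n : ℕ} (hn : 2 ≤ n)
    (G : SimpleGraph (Fin n)) [DecidableRel G.Adj] (hG : G.Connected)
    (W : Matrix (Fin n) (Fin n) ℝ) (hWsym : Wᵀ = W) (hWnonneg : ∀ i j, 0 ≤ W i j)
    (hWdiag : ∀ i, W i i = 0) (hadj : ∀ i j, G.Adj i j ↔ 0 < W i j)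
    (L : Matrix (Fin n) (Fin n) ℝ)
    (hL : L = Matrix.of fun i j => if i = j then ∑ k, W i k else -(W i j))
    (P : Matrix (Fin n) (Fin n) ℝ) (hP : IsMoorePenrose L P) :
    let R : Fin n → Fin n → ℝ := fun i j =>
      (Pi.single i 1 - Pi.single j 1) ⬝ᵥ (P *ᵥ (Pi.single i 1 - Pi.single j 1))
    let sumEdgeR : ℝ := (1 / 2) * ∑ i, ∑ j, if G.Adj i j then R i j else 0
    ∀ (μ : ℝ) (v : Fin n → ℝ), v ≠ 0 → L *ᵥ v = μ • v → 0 < μ →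
      4 / ((n : ℝ) * sumEdgeR) ≤ μ := by
  classical
  intro R S μ v hv hev hμ
  obtain ⟨hLPL, hPLP, hLPt, hPLt⟩ := hP
  have hW : ∀ i j, W j i = W i j := fun i j => congrFun (congrFun hWsym i) j
  have hLt : Lᵀ = L := by
    rw [hL]; ext i j
    simp only [Matrix.transpose_apply, Matrix.of_apply]
    rcases eq_or_ne i j with rfl | hij
    · simp
    · rw [if_neg hij, if_neg (Ne.symm hij), hW]
  -- row formula for L
  have hLapp : ∀ (x : Fin n → ℝ) (i : Fin n), (L *ᵥ x) i = ∑ j, W i j * (x i - x j) := by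
    intro x i
    rw [hL]
    show ∑ j, (if i = j then ∑ k, W i k else -(W i j)) * x j = _
    calc ∑ j, (if i = j then ∑ k, W i k else -(W i j)) * x j
        = ∑ j, ((if i = j then (∑ k, W i k) * x j else 0) - W i j * x j) := by
          refine Finset.sum_congr rfl fun j _ => ?_
          rcases eq_or_ne i j with rfl | hij
          · simp [hWdiag i]
          · simp [hij]
      _ = (∑ j, (if i = j then (∑ k, W i k) * x j else 0)) - ∑ j, W i j * x j :=
          Finset.sum_sub_distrib _ _
      _ = (∑ k, W i k) * x i - ∑ j, W i j * x j := by
          rw [Finset.sum_ite_eq]; simp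
      _ = ∑ j, W i j * (x i - x j) := by
          rw [Finset.sum_mul, ← Finset.sum_sub_distrib]
          exact Finset.sum_congr rfl fun j _ => by ring
  -- quadratic form of L
  have hquad : ∀ x : Fin n → ℝ,
      x ⬝ᵥ (L *ᵥ x) = (1/2) * ∑ i, ∑ j, W i j * (x i - x j)^2 := by
    intro x
    have h1 : x ⬝ᵥ (L *ᵥ x) = ∑ i, ∑ j, W i j * (x i * (x i - x j)) := by
      simp only [dotProduct, hLapp, Finset.mul_sum]
      exact Finset.sum_congr rfl fun i _ => Finset.sum_congr rfl fun j _ => by ring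
    have h2 : ∑ i, ∑ j, W i j * (x j * (x i - x j))
        = - ∑ i, ∑ j, W i j * (x i * (x i - x j)) := by
      rw [Finset.sum_comm]
      calc ∑ j, ∑ i, W i j * (x j * (x i - x j))
          = ∑ j, ∑ i, -(W j i * (x j * (x j - x i))) := by
            refine Finset.sum_congr rfl fun j _ => Finset.sum_congr rfl fun i _ => ?_
            rw [hW]; ring
        _ = - ∑ j, ∑ i, W j i * (x j * (x j - x i)) := by
            simp [Finset.sum_neg_distrib]
    have h3 : ∑ i, ∑ j, W i j * (x i - x j)^2
        = (∑ i, ∑ j, W i j * (x i * (x i - x j)))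
          - ∑ i, ∑ j, W i j * (x j * (x i - x j)) := by
      rw [← Finset.sum_sub_distrib]
      refine Finset.sum_congr rfl fun i _ => ?_
      rw [← Finset.sum_sub_distrib]
      exact Finset.sum_congr rfl fun j _ => by ring
    rw [h1, h3, h2]
    ring
  have hLpsd : ∀ x : Fin n → ℝ, 0 ≤ x ⬝ᵥ (L *ᵥ x) := by
    intro x
    rw [hquad]
    have : 0 ≤ ∑ i, ∑ j, W i j * (x i - x j)^2 :=
      Finset.sum_nonneg fun i _ => Finset.sum_nonneg fun j _ =>
        mul_nonneg (hWnonneg i j) (sq_nonneg _)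
    linarith
  -- P is symmetric
  have hPt : Pᵀ = P := by
    refine mp_unique ?_ ⟨hLPL, hPLP, hLPt, hPLt⟩
    refine ⟨?_, ?_, ?_, ?_⟩
    · calc L * Pᵀ * L = Lᵀ * Pᵀ * Lᵀ := by rw [hLt]
      _ = (L * (P * L))ᵀ := by rw [Matrix.transpose_mul, Matrix.transpose_mul]
      _ = (L * P * L)ᵀ := by rw [Matrix.mul_assoc]
      _ = Lᵀ := by rw [hLPL]
      _ = L := hLt
    · calc Pᵀ * L * Pᵀ = Pᵀ * Lᵀ * Pᵀ := by rw [hLt]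
      _ = (P * (L * P))ᵀ := by rw [Matrix.transpose_mul, Matrix.transpose_mul]
      _ = (P * L * P)ᵀ := by rw [Matrix.mul_assoc]
      _ = Pᵀ := by rw [hPLP]
    · calc (L * Pᵀ)ᵀ = P * Lᵀ := by rw [Matrix.transpose_mul, Matrix.transpose_transpose]
      _ = P * L := by rw [hLt]
      _ = (P * L)ᵀ := hPLt.symm
      _ = Lᵀ * Pᵀ := Matrix.transpose_mul P L
      _ = L * Pᵀ := by rw [hLt]
    · calc (Pᵀ * L)ᵀ = Lᵀ * P := by rw [Matrix.transpose_mul, Matrix.transpose_transpose]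
      _ = L * P := by rw [hLt]
      _ = (L * P)ᵀ := hLPt.symm
      _ = Pᵀ * Lᵀ := Matrix.transpose_mul L P
      _ = Pᵀ * L := by rw [hLt]
  -- symmetric bilinear form of P
  have hBsym : ∀ x y : Fin n → ℝ, x ⬝ᵥ (P *ᵥ y) = y ⬝ᵥ (P *ᵥ x) := by
    intro x y
    rw [Matrix.dotProduct_mulVec, ← Matrix.mulVec_transpose, hPt, dotProduct_comm]
  have hPpsd : ∀ x : Fin n → ℝ, 0 ≤ x ⬝ᵥ (P *ᵥ x) := by
    intro x
    have hx : x ⬝ᵥ (P *ᵥ x) = (P *ᵥ x) ⬝ᵥ (L *ᵥ (P *ᵥ x)) := by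
      conv_lhs => rw [← hPLP]
      rw [show (P * L * P) *ᵥ x = P *ᵥ (L *ᵥ (P *ᵥ x)) by
        rw [Matrix.mulVec_mulVec, Matrix.mulVec_mulVec]]
      rw [Matrix.dotProduct_mulVec, ← Matrix.mulVec_transpose, hPt]
    rw [hx]
    exact hLpsd _
  have hL1 : L *ᵥ (fun _ => (1:ℝ)) = 0 := by
    funext i
    rw [hLapp]
    simp
  have hcolsum : ∀ x : Fin n → ℝ, ∑ i, (L *ᵥ x) i = 0 := by
    intro x
    have h1 : ∑ i, (L *ᵥ x) i = (fun _ => (1:ℝ)) ⬝ᵥ (L *ᵥ x) := by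
      simp [dotProduct]
    rw [h1, Matrix.dotProduct_mulVec, ← Matrix.mulVec_transpose, hLt, hL1]
    simp
  -- kernel of L consists of constants
  have hconst : ∀ z : Fin n → ℝ, L *ᵥ z = 0 → ∀ i j, z i = z j := by
    intro z hz
    have hq0 : ∑ i, ∑ j, W i j * (z i - z j)^2 = 0 := by
      have h := hquad z
      rw [hz] at h
      simp [dotProduct] at h
      linarith
    have hterm : ∀ i j, W i j * (z i - z j)^2 = 0 := by
      intro i j
      have houter : ∀ i ∈ Finset.univ, (0:ℝ) ≤ ∑ j, W i j * (z i - z j)^2 :=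
        fun i _ => Finset.sum_nonneg fun j _ => mul_nonneg (hWnonneg i j) (sq_nonneg _)
      have h1 := (Finset.sum_eq_zero_iff_of_nonneg houter).mp hq0 i (Finset.mem_univ i)
      have hinner : ∀ j ∈ Finset.univ, (0:ℝ) ≤ W i j * (z i - z j)^2 :=
        fun j _ => mul_nonneg (hWnonneg i j) (sq_nonneg _)
      exact (Finset.sum_eq_zero_iff_of_nonneg hinner).mp h1 j (Finset.mem_univ j)
    have hadjEq : ∀ i j, G.Adj i j → z i = z j := by
      intro i j hij
      have hw := (hadj i j).1 hij
      have h0 := hterm i j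
      rcases mul_eq_zero.mp h0 with h | h
      · exact absurd h (ne_of_gt hw)
      · have := pow_eq_zero_iff (n := 2) (by norm_num) |>.mp h
        linarith [sub_eq_zero.mp this]
    intro i j
    obtain ⟨w⟩ := hG.preconnected i j
    induction w with
    | nil => rfl
    | cons h q ih => exact (hadjEq _ _ h).trans ih
  -- pseudoinverse inverts L on mean-zero vectors
  have hPL : ∀ x : Fin n → ℝ, (∑ i, x i = 0) → P *ᵥ (L *ᵥ x) = x := by
    intro x hx
    set z : Fin n → ℝ := x - P *ᵥ (L *ᵥ x) with hzdef
    have hLz : L *ᵥ z = 0 := by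
      rw [hzdef, Matrix.mulVec_sub]
      rw [Matrix.mulVec_mulVec, Matrix.mulVec_mulVec, hLPL]
      simp
    have hzc : ∀ i j, z i = z j := hconst z hLz
    have hPLx : ∑ i, (P *ᵥ (L *ᵥ x)) i = 0 := by
      have h1 : ∑ i, (P *ᵥ (L *ᵥ x)) i = (fun _ => (1:ℝ)) ⬝ᵥ (P *ᵥ (L *ᵥ x)) := by
        simp [dotProduct]
      have hswap : ∀ (A : Matrix (Fin n) (Fin n) ℝ) (x y : Fin n → ℝ),
          x ⬝ᵥ (A *ᵥ y) = (Aᵀ *ᵥ x) ⬝ᵥ y := fun A x y => by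
        rw [Matrix.dotProduct_mulVec, Matrix.mulVec_transpose]
      rw [h1, hBsym]
      calc (L *ᵥ x) ⬝ᵥ (P *ᵥ (fun _ => (1:ℝ)))
          = (Pᵀ *ᵥ (L *ᵥ x)) ⬝ᵥ (fun _ => (1:ℝ)) := hswap P _ _
        _ = ((P * L) *ᵥ x) ⬝ᵥ (fun _ => (1:ℝ)) := by
            rw [hPt, Matrix.mulVec_mulVec]
        _ = ((P * L)ᵀ *ᵥ (fun _ => (1:ℝ))) ⬝ᵥ x := by
            rw [dotProduct_comm, hswap]
        _ = (P *ᵥ (L *ᵥ (fun _ => (1:ℝ)))) ⬝ᵥ x := by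
            rw [hPLt, ← Matrix.mulVec_mulVec]
        _ = 0 := by rw [hL1]; simp
    have hzsum : ∑ i, z i = 0 := by
      rw [hzdef]
      simp only [Pi.sub_apply, Finset.sum_sub_distrib, hx, hPLx, sub_zero]
    have hz0 : ∀ i, z i = 0 := by
      intro i
      have hcard : ∑ _j : Fin n, z i = (n : ℝ) * z i := by
        simp [Finset.sum_const, Finset.card_univ, mul_comm]
      have heq : ∑ j : Fin n, z i = ∑ j : Fin n, z j :=
        Finset.sum_congr rfl fun j _ => hzc i j
      rw [hzsum] at heq
      have hn0 : (n:ℝ) ≠ 0 := Nat.cast_ne_zero.mpr (by omega)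
      rw [hcard] at heq
      exact (mul_eq_zero.mp heq).resolve_left hn0
    funext i
    have h : x i - (P *ᵥ (L *ᵥ x)) i = 0 := hz0 i
    have : (P *ᵥ (L *ᵥ x)) i = x i := by linarith
    exact this
  -- maximum principle
  have hmaxp : ∀ (k j0 : Fin n) (ψ : Fin n → ℝ),
      L *ᵥ ψ = (Pi.single k 1 - Pi.single j0 1 : Fin n → ℝ) → ∀ x, ψ x ≤ ψ k := by
    intro k j0 ψ hψ
    obtain ⟨x0, -, hx0⟩ := Finset.exists_max_image Finset.univ ψ ⟨k, Finset.mem_univ k⟩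
    set M := ψ x0 with hM
    have hstep : ∀ x, ψ x = M → x ≠ k → ∀ y, G.Adj x y → ψ y = M := by
      intro x hxM hxk y hxy
      have hrow : ∑ m, W x m * (ψ x - ψ m) = (Pi.single k 1 - Pi.single j0 1 : Fin n → ℝ) x := by
        rw [← hLapp, hψ]
      have hrhs : (Pi.single k 1 - Pi.single j0 1 : Fin n → ℝ) x ≤ 0 := by
        simp only [Pi.sub_apply]
        rw [Pi.single_apply, Pi.single_apply, if_neg hxk]
        split_ifs <;> norm_num
      have hnonneg : ∀ m ∈ Finset.univ, (0:ℝ) ≤ W x m * (ψ x - ψ m) := fun m _ =>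
        mul_nonneg (hWnonneg x m) (by rw [hxM]; linarith [hx0 m (Finset.mem_univ m)])
      have hzero := (Finset.sum_eq_zero_iff_of_nonneg hnonneg).mp
        (le_antisymm (hrow ▸ hrhs) (Finset.sum_nonneg hnonneg)) y (Finset.mem_univ y)
      have hWxy : 0 < W x y := (hadj x y).1 hxy
      have hdiff : ψ x - ψ y = 0 :=
        (mul_eq_zero.mp hzero).resolve_left (ne_of_gt hWxy)
      rw [← hxM]
      linarith
    have hwalk : ∀ (x y : Fin n) (w : G.Walk x y), ψ x = M → y = k → ψ k = M := by
      intro x y w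
      induction w with
      | nil => intro hx hk; rw [← hk]; exact hx
      | @cons u c y' h q ih =>
        intro hu hy
        by_cases huk : u = k
        · rw [← huk]; exact hu
        · exact ih (hstep u hu huk c h) hy
    have hkM : ψ k = M :=
      hwalk x0 k (Classical.choice (hG.preconnected x0 k)) rfl rfl
    intro x
    rw [hkM]
    exact hx0 x (Finset.mem_univ x)
  -- basic facts about R
  have hRdef : ∀ i j : Fin n, R i j =
      ((Pi.single i 1 - Pi.single j 1 : Fin n → ℝ)) ⬝ᵥ
        (P *ᵥ (Pi.single i 1 - Pi.single j 1 : Fin n → ℝ)) := fun i j => rfl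
  have hRnonneg : ∀ i j, 0 ≤ R i j := fun i j => hPpsd _
  have hRii : ∀ i, R i i = 0 := by
    intro i
    rw [hRdef]
    simp
  -- triangle inequality for effective resistance
  have tri : ∀ i k j : Fin n, R i j ≤ R i k + R k j := by
    intro i k j
    set a : Fin n → ℝ := Pi.single i 1 - Pi.single k 1 with ha
    set b : Fin n → ℝ := Pi.single k 1 - Pi.single j 1 with hb
    have hab : (Pi.single i 1 - Pi.single j 1 : Fin n → ℝ) = a + b := by
      rw [ha, hb]; abel
    have hexp : R i j = R i k + R k j + 2 * (a ⬝ᵥ (P *ᵥ b)) := by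
      rw [hRdef, hRdef, hRdef, hab, ← ha, ← hb]
      rw [Matrix.mulVec_add, dotProduct_add, add_dotProduct, add_dotProduct,
        hBsym b a]
      ring
    set ψ : Fin n → ℝ := P *ᵥ b with hψ
    have hsb : ∑ m, b m = 0 := by
      rw [hb]
      simp [Pi.sub_apply, Finset.sum_sub_distrib, Pi.single_apply]
    have hLψ : L *ᵥ ψ = b := by
      rw [hψ, Matrix.mulVec_mulVec]
      have hLP : L * P = P * L := by
        calc L * P = (L * P)ᵀ := hLPt.symm
        _ = Pᵀ * Lᵀ := Matrix.transpose_mul L P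
        _ = P * L := by rw [hPt, hLt]
      rw [hLP, ← Matrix.mulVec_mulVec]
      exact hPL b hsb
    have hmax := hmaxp k j ψ (by rw [hLψ, hb])
    have hC : a ⬝ᵥ ψ = ψ i - ψ k := by
      rw [ha]
      rw [sub_dotProduct, single_dotProduct, single_dotProduct,
        one_mul, one_mul]
    have hCle : a ⬝ᵥ (P *ᵥ b) ≤ 0 := by
      rw [← hψ, hC]
      linarith [hmax i]
    linarith [hexp, hCle]
  -- resistance along a walk
  have hwalkR : ∀ (i j : Fin n) (q : G.Walk i j),
      R i j ≤ (q.darts.map (fun d => R d.fst d.snd)).sum := by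
    intro i j q
    induction q with
    | nil => simp [hRii]
    | @cons u c j' h q ih =>
      rw [SimpleGraph.Walk.darts_cons, List.map_cons, List.sum_cons]
      have h1 := tri u c j'
      have h2 : R c j' ≤ (q.darts.map (fun d => R d.fst d.snd)).sum := ih
      calc R u j' ≤ R u c + R c j' := h1
      _ ≤ R u c + (q.darts.map (fun d => R d.fst d.snd)).sum := by linarith
  -- choose shortest paths
  have hexist : ∀ i j : Fin n, ∃ p : G.Walk i j, p.length = G.dist i j :=
    fun i j => hG.exists_walk_length_eq_dist i j
  choose p hplen using hexist
  set ℓ : Fin n → Fin n → List (Fin n × Fin n) :=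
    fun i j => (p i j).darts.map SimpleGraph.Dart.toProd with hℓ
  have hnodup : ∀ i j, (ℓ i j).Nodup := by
    intro i j
    have hpath : (p i j).IsPath :=
      SimpleGraph.Walk.isPath_of_length_eq_dist (p i j) (hplen i j)
    have hd : (p i j).darts.Nodup :=
      SimpleGraph.Walk.darts_nodup_of_support_nodup hpath.support_nodup
    exact hd.map SimpleGraph.Dart.toProd_injective
  have hmem : ∀ i j a b, (a, b) ∈ ℓ i j →
      G.Adj a b ∧ G.dist i a < G.dist i b ∧ G.dist j b < G.dist j a := by
    intro i j a b hab
    obtain ⟨d, hd, hdp⟩ := List.mem_map.mp hab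
    have hfst : d.fst = a := congrArg Prod.fst hdp
    have hsnd : d.snd = b := congrArg Prod.snd hdp
    have hdd : G.Adj a b := by rw [← hfst, ← hsnd]; exact d.adj
    have h1 := dart_dist hG (p i j) (hplen i j) d hd
    rw [hfst, hsnd] at h1
    have htri1 : G.dist i j ≤ G.dist i b + G.dist b j := hG.dist_triangle
    have htri2 : G.dist i j ≤ G.dist i a + G.dist a j := hG.dist_triangle
    have hcomm1 : G.dist j b = G.dist b j := SimpleGraph.dist_comm
    have hcomm2 : G.dist j a = G.dist a j := SimpleGraph.dist_comm
    exact ⟨hdd, by omega, by omega⟩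
  -- sum over darts as indicator sum
  have hsum_darts : ∀ i j : Fin n, ((p i j).darts.map (fun d => R d.fst d.snd)).sum
      = ∑ q ∈ Finset.univ ×ˢ Finset.univ, (if q ∈ ℓ i j then R q.1 q.2 else 0) := by
    intro i j
    have h1 : ((p i j).darts.map (fun d => R d.fst d.snd)).sum
        = ((ℓ i j).map (fun q => R q.1 q.2)).sum := by
      rw [hℓ]
      rw [List.map_map]
      rfl
    rw [h1, ← List.sum_toFinset _ (hnodup i j)]
    symm
    calc ∑ q ∈ Finset.univ ×ˢ Finset.univ, (if q ∈ ℓ i j then R q.1 q.2 else 0)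
        = ∑ q ∈ Finset.univ ×ˢ Finset.univ,
            (if q ∈ (ℓ i j).toFinset then R q.1 q.2 else 0) := by
          simp only [List.mem_toFinset]
      _ = ∑ q ∈ (Finset.univ ×ˢ Finset.univ) ∩ (ℓ i j).toFinset, R q.1 q.2 :=
          Finset.sum_ite_mem _ _ _
      _ = ∑ q ∈ (ℓ i j).toFinset, R q.1 q.2 := by
          rw [Finset.univ_product_univ, Finset.univ_inter]
  -- the total resistance sum
  set T := ∑ i, ∑ j, R i j with hT
  have hT1 : T ≤ ∑ i, ∑ j, ∑ q ∈ Finset.univ ×ˢ Finset.univ,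
      (if q ∈ ℓ i j then R q.1 q.2 else 0) := by
    rw [hT]
    refine Finset.sum_le_sum fun i _ => Finset.sum_le_sum fun j _ => ?_
    rw [← hsum_darts i j]
    exact hwalkR i j (p i j)
  have hT2 : ∑ i, ∑ j, ∑ q ∈ Finset.univ ×ˢ Finset.univ,
        (if q ∈ ℓ i j then R q.1 q.2 else 0)
      = ∑ q ∈ Finset.univ ×ˢ Finset.univ, ∑ i, ∑ j,
        (if q ∈ ℓ i j then R q.1 q.2 else 0) := by
    calc ∑ i, ∑ j, ∑ q ∈ Finset.univ ×ˢ Finset.univ,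
          (if q ∈ ℓ i j then R q.1 q.2 else 0)
        = ∑ i, ∑ q ∈ Finset.univ ×ˢ Finset.univ, ∑ j,
          (if q ∈ ℓ i j then R q.1 q.2 else 0) :=
          Finset.sum_congr rfl fun i _ => Finset.sum_comm
      _ = ∑ q ∈ Finset.univ ×ˢ Finset.univ, ∑ i, ∑ j,
          (if q ∈ ℓ i j then R q.1 q.2 else 0) := Finset.sum_comm
  -- per ordered pair counting bound
  have hpair : ∀ a b : Fin n,
      ∑ i, ∑ j, (if (a, b) ∈ ℓ i j then R a b else 0)
        ≤ (if G.Adj a b then R a b else 0) * ((n:ℝ)^2/4) := by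
    intro a b
    by_cases hab : G.Adj a b
    · rw [if_pos hab]
      set A := Finset.univ.filter (fun x : Fin n => G.dist x a < G.dist x b) with hA
      set B := Finset.univ.filter (fun x : Fin n => G.dist x b < G.dist x a) with hB
      have hstep1 : ∀ i j : Fin n, (if (a, b) ∈ ℓ i j then R a b else 0)
          ≤ (if i ∈ A ∧ j ∈ B then R a b else 0) := by
        intro i j
        by_cases hm : (a, b) ∈ ℓ i j
        · obtain ⟨-, h1, h2⟩ := hmem i j a b hm
          rw [if_pos hm, if_pos]
          exact ⟨by rw [hA]; simp [Finset.mem_filter]; exact h1,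
            by rw [hB]; simp [Finset.mem_filter]; exact h2⟩
        · rw [if_neg hm]
          split_ifs
          · exact hRnonneg a b
          · exact le_refl 0
      have hinner : ∀ i : Fin n, ∑ j, (if i ∈ A ∧ j ∈ B then R a b else 0)
          = (if i ∈ A then (B.card : ℝ) * R a b else 0) := by
        intro i
        by_cases hiA : i ∈ A
        · rw [if_pos hiA]
          have : ∀ j : Fin n, (if i ∈ A ∧ j ∈ B then R a b else 0)
              = (if j ∈ B then R a b else 0) := by
            intro j; by_cases hjB : j ∈ B <;> simp [hiA, hjB]
          rw [Finset.sum_congr rfl fun j _ => this j]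
          rw [Finset.sum_ite_mem, Finset.univ_inter, Finset.sum_const,
            nsmul_eq_mul]
        · rw [if_neg hiA]
          refine Finset.sum_eq_zero fun j _ => ?_
          simp [hiA]
      have hstep2 : ∑ i, ∑ j, (if i ∈ A ∧ j ∈ B then R a b else 0)
          = (A.card : ℝ) * ((B.card : ℝ) * R a b) := by
        rw [Finset.sum_congr rfl fun i _ => hinner i]
        rw [Finset.sum_ite_mem, Finset.univ_inter, Finset.sum_const, nsmul_eq_mul]
      have hcardAB : A.card + B.card ≤ n := by
        have hdisj : Disjoint A B := by
          rw [Finset.disjoint_left]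
          intro x hxA hxB
          rw [hA, Finset.mem_filter] at hxA
          rw [hB, Finset.mem_filter] at hxB
          omega
        have h1 : (A ∪ B).card = A.card + B.card :=
          Finset.card_union_of_disjoint hdisj
        have h2 : (A ∪ B).card ≤ Finset.univ.card := Finset.card_le_univ _
        rw [Finset.card_univ, Fintype.card_fin] at h2
        omega
      have hprod : (A.card : ℝ) * (B.card : ℝ) ≤ (n:ℝ)^2/4 := by
        have hc : (A.card : ℝ) + (B.card : ℝ) ≤ (n : ℝ) := by exact_mod_cast hcardAB
        nlinarith [sq_nonneg ((A.card : ℝ) - (B.card : ℝ)),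
          sq_nonneg ((A.card : ℝ) + (B.card : ℝ)), (Nat.cast_nonneg A.card : (0:ℝ) ≤ A.card),
          (Nat.cast_nonneg B.card : (0:ℝ) ≤ B.card)]
      calc ∑ i, ∑ j, (if (a, b) ∈ ℓ i j then R a b else 0)
          ≤ ∑ i, ∑ j, (if i ∈ A ∧ j ∈ B then R a b else 0) :=
            Finset.sum_le_sum fun i _ => Finset.sum_le_sum fun j _ => hstep1 i j
        _ = (A.card : ℝ) * ((B.card : ℝ) * R a b) := hstep2
        _ = ((A.card : ℝ) * (B.card : ℝ)) * R a b := by ring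
        _ ≤ ((n:ℝ)^2/4) * R a b := mul_le_mul_of_nonneg_right hprod (hRnonneg a b)
        _ = R a b * ((n:ℝ)^2/4) := by ring
    · rw [if_neg hab, zero_mul]
      refine le_of_eq (Finset.sum_eq_zero fun i _ => Finset.sum_eq_zero fun j _ => ?_)
      exact if_neg (fun hm => hab (hmem i j a b hm).1)
  have hS : S = (1/2) * ∑ i, ∑ j, (if G.Adj i j then R i j else 0) := rfl
  have hTS : T ≤ (n:ℝ)^2/2 * S := by
    have h3 : ∑ q ∈ Finset.univ ×ˢ Finset.univ, ∑ i, ∑ j,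
          (if q ∈ ℓ i j then R q.1 q.2 else 0)
        ≤ ∑ q ∈ Finset.univ ×ˢ Finset.univ,
          (if G.Adj q.1 q.2 then R q.1 q.2 else 0) * ((n:ℝ)^2/4) := by
      refine Finset.sum_le_sum fun q _ => ?_
      have := hpair q.1 q.2
      simpa using this
    have h4 : ∑ q ∈ Finset.univ ×ˢ Finset.univ,
          (if G.Adj q.1 q.2 then R q.1 q.2 else 0) * ((n:ℝ)^2/4)
        = ((n:ℝ)^2/4) * ∑ i, ∑ j, (if G.Adj i j then R i j else 0) := by
      rw [← Finset.sum_mul]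
      rw [Finset.sum_product]
      ring
    have h5 : ((n:ℝ)^2/4) * ∑ i, ∑ j, (if G.Adj i j then R i j else 0)
        = (n:ℝ)^2/2 * S := by
      rw [hS]; ring
    calc T ≤ _ := hT1
    _ = _ := hT2
    _ ≤ _ := h3
    _ = _ := h4
    _ = (n:ℝ)^2/2 * S := h5
  -- eigenvector facts
  have hvsum : ∑ i, v i = 0 := by
    have h1 := hcolsum v
    rw [hev] at h1
    simp only [Pi.smul_apply, smul_eq_mul, ← Finset.mul_sum] at h1
    rcases mul_eq_zero.mp h1 with h | h
    · exact absurd h (ne_of_gt hμ)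
    · exact h
  have hPv : P *ᵥ (L *ᵥ v) = v := hPL v hvsum
  have hvv : 0 < v ⬝ᵥ v := by
    have h1 : ∃ i, v i ≠ 0 := by
      by_contra hc; push_neg at hc; exact hv (funext hc)
    obtain ⟨i, hi⟩ := h1
    exact Finset.sum_pos' (fun j _ => mul_self_nonneg _)
      ⟨i, Finset.mem_univ i, mul_self_pos.2 hi⟩
  have hcs : ∀ i j : Fin n, (v i - v j)^2 ≤ R i j * (μ * (v ⬝ᵥ v)) := by
    intro i j
    set a : Fin n → ℝ := Pi.single i 1 - Pi.single j 1 with ha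
    have h1 : a ⬝ᵥ (P *ᵥ (L *ᵥ v)) = v i - v j := by
      rw [hPv, ha, sub_dotProduct, single_dotProduct,
        single_dotProduct, one_mul, one_mul]
    have h2 : (L *ᵥ v) ⬝ᵥ (P *ᵥ (L *ᵥ v)) = μ * (v ⬝ᵥ v) := by
      rw [hPv, hev, smul_dotProduct, smul_eq_mul]
    have h3 := psd_cauchy P hPpsd hBsym a (L *ᵥ v)
    rw [h1, h2] at h3
    exact h3
  have hsumsq : ∑ i, ∑ j, (v i - v j)^2 = 2 * (n:ℝ) * (v ⬝ᵥ v) := by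
    have hinner : ∀ i : Fin n, ∑ j, (v i - v j)^2 = (n:ℝ) * (v i)^2 + (v ⬝ᵥ v) := by
      intro i
      have hexp : ∀ j : Fin n, (v i - v j)^2 = (v i)^2 - 2 * v i * v j + (v j)^2 :=
        fun j => by ring
      rw [Finset.sum_congr rfl fun j _ => hexp j]
      rw [Finset.sum_add_distrib, Finset.sum_sub_distrib, Finset.sum_const,
        Finset.card_univ, Fintype.card_fin]
      have hmid : ∑ j, 2 * v i * v j = 0 := by
        rw [← Finset.mul_sum, hvsum, mul_zero]
      have hdot : ∑ j, (v j)^2 = v ⬝ᵥ v := by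
        rw [dotProduct]
        exact Finset.sum_congr rfl fun j _ => (sq (v j)) ▸ (pow_two (v j))
      rw [hmid, hdot, nsmul_eq_mul]
      ring
    rw [Finset.sum_congr rfl fun i _ => hinner i, Finset.sum_add_distrib,
      Finset.sum_const, Finset.card_univ, Fintype.card_fin, ← Finset.mul_sum]
    have hdot : ∑ i, (v i)^2 = v ⬝ᵥ v := by
      rw [dotProduct]
      exact Finset.sum_congr rfl fun j _ => (pow_two (v j))
    rw [hdot, nsmul_eq_mul]
    ring
  have hTmu : 2 * (n:ℝ) ≤ T * μ := by
    have h1 : ∑ i, ∑ j, (v i - v j)^2 ≤ ∑ i, ∑ j, R i j * (μ * (v ⬝ᵥ v)) :=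
      Finset.sum_le_sum fun i _ => Finset.sum_le_sum fun j _ => hcs i j
    have h2 : ∑ i, ∑ j, R i j * (μ * (v ⬝ᵥ v)) = T * (μ * (v ⬝ᵥ v)) := by
      rw [hT, Finset.sum_mul]
      exact Finset.sum_congr rfl fun i _ => (Finset.sum_mul _ _ _).symm
    rw [hsumsq, h2] at h1
    have h3 : (2 * (n:ℝ)) * (v ⬝ᵥ v) ≤ (T * μ) * (v ⬝ᵥ v) := by
      calc (2 * (n:ℝ)) * (v ⬝ᵥ v) = 2 * (n:ℝ) * (v ⬝ᵥ v) := by ring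
      _ ≤ T * (μ * (v ⬝ᵥ v)) := h1
      _ = (T * μ) * (v ⬝ᵥ v) := by ring
    exact le_of_mul_le_mul_right h3 hvv
  -- final assembly
  have hn2 : (2:ℝ) ≤ (n:ℝ) := by exact_mod_cast hn
  have hnpos : (0:ℝ) < (n:ℝ) := by linarith
  have hTpos : 0 < T * μ := by linarith
  have hTpos' : 0 < T := by nlinarith
  have hSpos : 0 < S := by nlinarith
  have hmuls : 0 < (n:ℝ) * S := mul_pos hnpos hSpos
  rw [div_le_iff₀ hmuls]
  have hfin : T * μ ≤ ((n:ℝ)^2/2 * S) * μ := mul_le_mul_of_nonneg_right hTS hμ.le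
  nlinarith [hTmu, hfin, hμ, hSpos, hnpos, hn2]
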